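/- Let F be an algebraically closed field, G a finite group, and S ≤ H subgroups that are both normal in G. Let V be a finite-dimensional simple F[G]-module and U a simple F[H]-submodule of Res^G_H V. Then κ^G_S(V) = κ^G_H(V) · κ^H_S(U), i.e. the composition length of V as an F[S]-module equals the product of the composition length of V as an F[H]-module and the composition length of U as an F[S]-module. -/

import Mathlib

open Module

section Defs

variable {F : Type} [Field F] {G : Type} [Group G] {V : Type} [AddCommGroup V] [Module F V]

def IsSubrep (ρ : Representation F G V) (p : Submodule F V) : Prop :=
  ∀ (g : G) (v : V), v ∈ p → ρ g v ∈ p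

def IsIrredRep (ρ : Representation F G V) : Prop :=
  (⊥ : Submodule F V) ≠ ⊤ ∧ ∀ p : Submodule F V, IsSubrep ρ p → p = ⊥ ∨ p = ⊤

/-- `CompLengthIs ρ T k`: the `G`-invariant subspace `T` of `V` has composition length `k`
as a module over the group algebra `F[G]`: there is a chain `⊥ = c₀ < c₁ < ⋯ < c_k = T` of
invariant subspaces with no invariant subspace strictly between consecutive terms. -/
def CompLengthIs (ρ : Representation F G V) (T : Submodule F V) (k : ℕ) : Prop :=
  ∃ c : Fin (k + 1) → Submodule F V,
    c 0 = ⊥ ∧ c (Fin.last k) = T ∧ (∀ i, IsSubrep ρ (c i)) ∧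
    (∀ i : Fin k, c i.castSucc < c i.succ) ∧
    (∀ i : Fin k, ∀ q : Submodule F V, IsSubrep ρ q →
      c i.castSucc ≤ q → q ≤ c i.succ → q = c i.castSucc ∨ q = c i.succ)

/-- `σ` (a representation on `U`) is a composition factor of `ρ` (a representation on `V`):
there are invariant subspaces `p ≤ q` of `V` and an equivariant `F`-linear surjection
`q → U` whose kernel is exactly `p`, i.e. `q/p ≅ U` as `G`-modules. -/
def IsCompFactor {U : Type} [AddCommGroup U] [Module F U]
    (σ : Representation F G U) (ρ : Representation F G V) : Prop :=
  ∃ (p q : Submodule F V) (_ : IsSubrep ρ p) (hq : IsSubrep ρ q) (_ : p ≤ q)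
    (f : ↥q →ₗ[F] U), Function.Surjective f ∧
      (∀ x : ↥q, f x = 0 ↔ (x : V) ∈ p) ∧
      (∀ (g : G) (x : ↥q), f ⟨ρ g x, hq g x x.2⟩ = σ g (f x))

end Defs

/-! ### Auxiliary machinery -/

section GA
variable {F : Type} [Field F] {K : Type} [Group K] {V : Type} [AddCommGroup V] [Module F V]

/-- The group algebra tagged by a representation, so that instances can depend on `σ`. -/
def GA (σ : Representation F K V) : Type := MonoidAlgebra F K

noncomputable instance (σ : Representation F K V) : Ring (GA σ) :=
  inferInstanceAs (Ring (MonoidAlgebra F K))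

noncomputable instance (σ : Representation F K V) : Algebra F (GA σ) :=
  inferInstanceAs (Algebra F (MonoidAlgebra F K))

noncomputable instance gaModule (σ : Representation F K V) : Module (GA σ) V :=
  Module.compHom V (σ.asAlgebraHom.toRingHom)

lemma ga_smul_def (σ : Representation F K V) (r : GA σ) (v : V) :
    r • v = σ.asAlgebraHom r v := rfl

instance (σ : Representation F K V) : IsScalarTower F (GA σ) V :=
  ⟨fun f r v => by
    show σ.asAlgebraHom (f • r) v = f • σ.asAlgebraHom r v
    have h : σ.asAlgebraHom (f • r) = f • σ.asAlgebraHom r :=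
      map_smul σ.asAlgebraHom.toLinearMap f r
    rw [h, LinearMap.smul_apply]⟩

lemma ga_single_smul (σ : Representation F K V) (g : K) (v : V) :
    (show GA σ from MonoidAlgebra.single g 1) • v = σ g v := by
  show σ.asAlgebraHom (MonoidAlgebra.single g 1) v = σ g v
  rw [Representation.asAlgebraHom_single, one_smul]

lemma ga_smul_mem (σ : Representation F K V) {p : Submodule F V} (hp : IsSubrep σ p)
    (r : GA σ) {v : V} (hv : v ∈ p) : r • v ∈ p := by
  show σ.asAlgebraHom r v ∈ p
  have : ∀ s : MonoidAlgebra F K, σ.asAlgebraHom s v ∈ p := by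
    intro s
    induction s using MonoidAlgebra.induction_on with
    | of g =>
        rw [Representation.asAlgebraHom_of]
        exact hp g v hv
    | add f g hf hg =>
        rw [map_add, LinearMap.add_apply]
        exact p.add_mem hf hg
    | smul c f hf =>
        have h : σ.asAlgebraHom (c • f) = c • σ.asAlgebraHom f :=
          map_smul σ.asAlgebraHom.toLinearMap c f
        rw [h, LinearMap.smul_apply]
        exact p.smul_mem c hf
  exact this r

/-- An invariant subspace as a submodule over the group algebra. -/
def subOfInv (σ : Representation F K V) (p : Submodule F V) (hp : IsSubrep σ p) :
    Submodule (GA σ) V where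
  carrier := p
  add_mem' := fun ha hb => p.add_mem ha hb
  zero_mem' := p.zero_mem
  smul_mem' := fun r _ hv => ga_smul_mem σ hp r hv

@[simp] lemma mem_subOfInv (σ : Representation F K V) (p : Submodule F V) (hp : IsSubrep σ p)
    (v : V) : v ∈ subOfInv σ p hp ↔ v ∈ p := Iff.rfl

lemma res_subOfInv (σ : Representation F K V) (p : Submodule F V) (hp : IsSubrep σ p) :
    (subOfInv σ p hp).restrictScalars F = p := rfl

lemma isSubrep_restrictScalars (σ : Representation F K V) (q : Submodule (GA σ) V) :
    IsSubrep σ (q.restrictScalars F) := by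
  intro g v hv
  have : (show GA σ from MonoidAlgebra.single g 1) • v ∈ q := q.smul_mem _ hv
  rwa [ga_single_smul] at this

end GA

section Count
variable {F R V : Type} [Field F] [Ring R] [Algebra F R]
  [AddCommGroup V] [Module F V] [Module R V] [IsScalarTower F R V] [FiniteDimensional F V]

omit [FiniteDimensional F V] in
lemma restrictScalars_sup' (p q : Submodule R V) :
    (p ⊔ q).restrictScalars F = p.restrictScalars F ⊔ q.restrictScalars F := by
  ext v
  simp only [Submodule.restrictScalars_mem, Submodule.mem_sup]

omit [FiniteDimensional F V] in
lemma restrictScalars_inf' (p q : Submodule R V) :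
    (p ⊓ q).restrictScalars F = p.restrictScalars F ⊓ q.restrictScalars F := rfl

/-- In a module that is a sum of simple submodules all of the same finite `F`-dimension `n`,
every covering step in the submodule lattice increases the `F`-dimension by exactly `n`. -/
lemma cover_dim {ι : Type}
    (T : ι → Submodule R V) (hT : ∀ i, IsAtom (T i)) (hsup : (⨆ i, T i) = ⊤)
    {n : ℕ} (hdim : ∀ i, finrank F ((T i).restrictScalars F) = n)
    {X Y : Submodule R V} (hXY : X < Y)
    (hcov : ∀ q : Submodule R V, X ≤ q → q ≤ Y → q = X ∨ q = Y) :
    finrank F (Y.restrictScalars F) = finrank F (X.restrictScalars F) + n := by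
  have hss : IsSemisimpleModule R V := by
    rw [← sSup_simples_eq_top_iff_isSemisimpleModule]
    refine le_antisymm le_top ?_
    rw [← hsup]
    exact iSup_le fun i => le_sSup (isSimpleModule_iff_isAtom.mpr (hT i))
  obtain ⟨Z, hZ⟩ := exists_isCompl X
  set C := Z ⊓ Y with hCdef
  have hXle : X ≤ Y := le_of_lt hXY
  have hinf : X ⊓ C = ⊥ := by
    refine le_bot_iff.mp ?_
    calc X ⊓ (Z ⊓ Y) ≤ X ⊓ Z := inf_le_inf_left X inf_le_left
    _ = ⊥ := hZ.inf_eq_bot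
  have hsup2 : X ⊔ C = Y := by
    have h := sup_inf_assoc_of_le Z hXle
    rw [hZ.sup_eq_top, top_inf_eq] at h
    exact h.symm
  have hCle : C ≤ Y := inf_le_right
  have hCbot : C ≠ ⊥ := fun h => hXY.ne (by rw [← hsup2, h, sup_bot_eq])
  have hCatom : IsAtom C := by
    constructor
    · exact hCbot
    · intro q hq
      rcases hcov (X ⊔ q) le_sup_left (sup_le hXle (hq.le.trans hCle)) with h1 | h2
      · have : q ≤ X ⊓ C := le_inf (le_sup_right.trans h1.le) hq.le
        rw [hinf] at this
        exact le_bot_iff.mp this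
      · exfalso
        have hqC : q ≤ C := hq.le
        have h3 := sup_inf_assoc_of_le X hqC
        rw [sup_comm q X, h2, hinf, sup_bot_eq, inf_eq_right.mpr hCle] at h3
        exact hq.ne h3.symm
  -- find an isomorphism of C with some T i
  obtain ⟨Z', hZ'⟩ := exists_isCompl C
  set π := C.projectionOnto Z' hZ' with hπdef
  have hπ : ∃ i, (π ∘ₗ (T i).subtype) ≠ 0 := by
    by_contra h
    push_neg at h
    have hker : ∀ i, T i ≤ LinearMap.ker π := by
      intro i x hx
      have := DFunLike.congr_fun (h i) ⟨x, hx⟩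
      simpa using this
    have hπ0 : π = 0 := by
      rw [← LinearMap.ker_eq_top]
      refine top_le_iff.mp ?_
      rw [← hsup]
      exact iSup_le hker
    obtain ⟨x, hxC, hx0⟩ := Submodule.ne_bot_iff C |>.mp hCbot
    have h0 := Submodule.linearProjOfIsCompl_apply_left hZ' ⟨x, hxC⟩
    rw [← hπdef, hπ0] at h0
    exact hx0 (by simpa [Subtype.ext_iff, eq_comm] using h0)
  obtain ⟨i, hi⟩ := hπ
  haveI hsimpT : IsSimpleModule R (T i) := isSimpleModule_iff_isAtom.mpr (hT i)
  haveI hsimpC : IsSimpleModule R C := isSimpleModule_iff_isAtom.mpr hCatom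
  set f := π ∘ₗ (T i).subtype with hfdef
  have hbij : Function.Bijective f :=
    ⟨LinearMap.injective_of_ne_zero hi, LinearMap.surjective_of_ne_zero hi⟩
  let e : (T i) ≃ₗ[R] C := LinearEquiv.ofBijective f hbij
  let e' : ((T i).restrictScalars F) ≃ₗ[R] (C.restrictScalars F) :=
    (Submodule.restrictScalarsEquiv F R V (T i)).trans
      (e.trans (Submodule.restrictScalarsEquiv F R V C).symm)
  have hdimC : finrank F (C.restrictScalars F) = n := by
    rw [← hdim i]
    exact ((e'.restrictScalars F).finrank_eq).symm
  have hkey := Submodule.finrank_sup_add_finrank_inf_eq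
    (X.restrictScalars F) (C.restrictScalars F)
  rw [← restrictScalars_sup', ← restrictScalars_inf', hsup2, hinf,
    Submodule.restrictScalars_bot, finrank_bot, add_zero, hdimC] at hkey
  exact hkey

end Count

section Rep
variable {F G V : Type} [Field F] [Group G] [AddCommGroup V] [Module F V]
  (ρ : Representation F G V)

lemma rho_rho (a b : G) (v : V) : ρ a (ρ b v) = ρ (a * b) v := by
  rw [map_mul]; rfl

lemma rho_injective (g : G) : Function.Injective (ρ g) := by
  intro x y h
  have h2 := congrArg (ρ g⁻¹) h
  rwa [rho_rho, rho_rho, inv_mul_cancel, map_one, Module.End.one_apply,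
    Module.End.one_apply] at h2

lemma map_map_rho (p : Submodule F V) (g₁ g₂ : G) :
    (p.map (ρ g₁)).map (ρ g₂) = p.map (ρ (g₂ * g₁)) := by
  rw [← Submodule.map_comp]
  congr 1
  exact LinearMap.ext fun v => rho_rho ρ g₂ g₁ v

lemma map_rho_one (p : Submodule F V) : p.map (ρ (1 : G)) = p := by
  rw [map_one, Module.End.one_eq_id, Submodule.map_id]

variable (K : Subgroup G) [hKn : K.Normal]

lemma map_isSubrep {W : Submodule F V} (hW : IsSubrep (ρ.comp K.subtype) W) (g : G) :
    IsSubrep (ρ.comp K.subtype) (W.map (ρ g)) := by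
  rintro k v ⟨w, hw, rfl⟩
  have hmem : g⁻¹ * ↑k * g ∈ K := by
    have := hKn.conj_mem ↑k k.2 g⁻¹
    rwa [inv_inv] at this
  refine ⟨ρ (g⁻¹ * ↑k * g) w, hW ⟨_, hmem⟩ w hw, ?_⟩
  show ρ g (ρ (g⁻¹ * ↑k * g) w) = ρ ↑k (ρ g w)
  rw [rho_rho, rho_rho]
  congr 1
  group

/-- Key counting step: if `W` is a simple invariant subspace for a normal subgroup `K`
inside an irreducible `G`-representation, every covering step in the lattice of
`K`-invariant subspaces increases dimension by `finrank F W`. -/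
lemma cover_finrank [FiniteDimensional F V]
    (hV : IsIrredRep ρ)
    (W : Submodule F V) (hW : IsSubrep (ρ.comp K.subtype) W) (hWne : W ≠ ⊥)
    (hWsimple : ∀ p : Submodule F V, p ≤ W → IsSubrep (ρ.comp K.subtype) p → p = ⊥ ∨ p = W)
    {X Y : Submodule F V} (hXinv : IsSubrep (ρ.comp K.subtype) X)
    (hYinv : IsSubrep (ρ.comp K.subtype) Y) (hXY : X < Y)
    (hcov : ∀ q : Submodule F V, IsSubrep (ρ.comp K.subtype) q → X ≤ q → q ≤ Y →
      q = X ∨ q = Y) :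
    finrank F Y = finrank F X + finrank F W := by
  set σ := ρ.comp K.subtype with hσ
  let T : G → Submodule (GA σ) V := fun g => subOfInv σ (W.map (ρ g)) (map_isSubrep ρ K hW g)
  have hTres : ∀ g, (T g).restrictScalars F = W.map (ρ g) := fun g => rfl
  have hTatom : ∀ g, IsAtom (T g) := by
    intro g
    constructor
    · intro hbot
      obtain ⟨w, hw, hw0⟩ := Submodule.ne_bot_iff W |>.mp hWne
      have hmem : ρ g w ∈ T g := ⟨w, hw, rfl⟩
      rw [hbot] at hmem
      have h0 : ρ g w = 0 := hmem
      exact hw0 (rho_injective ρ g (by rw [h0, map_zero]))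
    · intro q hq
      have hpinv : IsSubrep σ (q.restrictScalars F) := isSubrep_restrictScalars σ q
      have hple : q.restrictScalars F ≤ W.map (ρ g) := fun x hx => hq.le hx
      have hp'inv : IsSubrep σ ((q.restrictScalars F).map (ρ g⁻¹)) :=
        map_isSubrep ρ K hpinv g⁻¹
      have hp'le : (q.restrictScalars F).map (ρ g⁻¹) ≤ W := by
        have h := Submodule.map_mono (f := ρ g⁻¹) hple
        rwa [map_map_rho, inv_mul_cancel, map_rho_one] at h
      have hback : ((q.restrictScalars F).map (ρ g⁻¹)).map (ρ g) = q.restrictScalars F := by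
        rw [map_map_rho, mul_inv_cancel, map_rho_one]
      rcases hWsimple _ hp'le hp'inv with h | h
      · rw [h, Submodule.map_bot] at hback
        exact (Submodule.restrictScalars_eq_bot_iff F (GA σ) V).mp hback.symm
      · exfalso
        apply hq.ne
        apply Submodule.restrictScalars_injective F _ _
        rw [h] at hback
        rw [hTres g, ← hback]
  have hTsup : (⨆ g, T g) = ⊤ := by
    have hJinv : IsSubrep ρ (⨆ g : G, W.map (ρ g)) := by
      intro g' v hv
      refine Submodule.iSup_induction (motive := fun v => ρ g' v ∈ ⨆ g : G, W.map (ρ g))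
        _ hv ?_ ?_ ?_
      · rintro g x ⟨w, hw, rfl⟩
        refine Submodule.mem_iSup_of_mem (g' * g) ⟨w, hw, ?_⟩
        rw [rho_rho]
      · show ρ g' (0 : V) ∈ ⨆ g : G, W.map (ρ g)
        rw [map_zero]; exact zero_mem _
      · intro x y hx hy
        show ρ g' (x + y) ∈ ⨆ g : G, W.map (ρ g)
        rw [map_add]
        exact add_mem hx hy
    have hJW : W ≤ ⨆ g : G, W.map (ρ g) := by
      refine le_trans ?_ (le_iSup _ (1 : G))
      rw [map_rho_one]
    have hJtop : (⨆ g : G, W.map (ρ g)) = ⊤ := by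
      rcases hV.2 _ hJinv with h | h
      · exact absurd (le_bot_iff.mp (hJW.trans h.le)) hWne
      · exact h
    rw [eq_top_iff]
    intro v _
    have hv : v ∈ ⨆ g : G, W.map (ρ g) := by rw [hJtop]; trivial
    refine Submodule.iSup_induction (motive := fun v => v ∈ ⨆ g, T g) _ hv ?_ ?_ ?_
    · intro g x hx
      exact Submodule.mem_iSup_of_mem g hx
    · exact zero_mem _
    · intro x y hx hy
      exact add_mem hx hy
  have hTdim : ∀ g, finrank F ((T g).restrictScalars F) = finrank F W := by
    intro g
    rw [hTres g]
    exact ((Submodule.equivMapOfInjective (ρ g) (rho_injective ρ g) W).finrank_eq).symm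
  have hlt : subOfInv σ X hXinv < subOfInv σ Y hYinv := by
    refine lt_of_le_of_ne (fun x hx => hXY.le hx) ?_
    intro hEq
    apply hXY.ne
    have h := congrArg (Submodule.restrictScalars F) hEq
    rwa [res_subOfInv, res_subOfInv] at h
  have hcov' : ∀ q : Submodule (GA σ) V, subOfInv σ X hXinv ≤ q → q ≤ subOfInv σ Y hYinv →
      q = subOfInv σ X hXinv ∨ q = subOfInv σ Y hYinv := by
    intro q h1 h2
    have hqinv := isSubrep_restrictScalars σ q
    rcases hcov (q.restrictScalars F) hqinv (fun x hx => h1 hx) (fun x hx => h2 hx) with h | h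
    · left
      apply Submodule.restrictScalars_injective F _ _
      rw [res_subOfInv]; exact h
    · right
      apply Submodule.restrictScalars_injective F _ _
      rw [res_subOfInv]; exact h
  have hmain := cover_dim T hTatom hTsup hTdim hlt hcov'
  rwa [res_subOfInv, res_subOfInv] at hmain

end Rep

section Series
variable {F G V : Type} [Field F] [Group G] [AddCommGroup V] [Module F V]
  [FiniteDimensional F V]

lemma series_finrank {k n : ℕ} {T : Submodule F V} {σ : Representation F G V}
    (hc : CompLengthIs σ T k)
    (hstep : ∀ X Y : Submodule F V, IsSubrep σ X → IsSubrep σ Y → X < Y →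
      (∀ q, IsSubrep σ q → X ≤ q → q ≤ Y → q = X ∨ q = Y) →
      finrank F Y = finrank F X + n) :
    finrank F T = k * n := by
  obtain ⟨d, h0, hlast, hinv, hlt, hcov⟩ := hc
  have key : ∀ i : Fin (k+1), finrank F (d i) = i.val * n := by
    intro i
    induction i using Fin.induction with
    | zero => rw [h0]; simp
    | succ j ih =>
        have h := hstep (d j.castSucc) (d j.succ) (hinv _) (hinv _) (hlt j) (hcov j)
        rw [h, ih, Fin.coe_castSucc, Fin.val_succ, Nat.succ_mul]
  have h := key (Fin.last k)
  rw [hlast, Fin.val_last] at h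
  exact h

end Series

theorem statement_14
    {F : Type} [Field F] [IsAlgClosed F]
    {G : Type} [Group G] [Finite G]
    (S H : Subgroup G) (hSH : S ≤ H) [S.Normal] [H.Normal]
    {V : Type} [AddCommGroup V] [Module F V] [FiniteDimensional F V]
    (ρ : Representation F G V) (hV : IsIrredRep ρ)
    -- `U` is a simple `F[H]`-submodule of `Res^G_H V`
    (U : Submodule F V) (hUsub : IsSubrep (ρ.comp H.subtype) U) (hUne : U ≠ ⊥)
    (hUsimple : ∀ p : Submodule F V, p ≤ U → IsSubrep (ρ.comp H.subtype) p →
      p = ⊥ ∨ p = U) :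
    ∀ a b c : ℕ,
      CompLengthIs (ρ.comp S.subtype) ⊤ a →
      CompLengthIs (ρ.comp H.subtype) ⊤ b →
      CompLengthIs (ρ.comp S.subtype) U c →
      a = b * c := by
  intro a b c ha hb hcs
  -- c is positive
  rcases Nat.eq_zero_or_pos c with hc0 | hcpos
  · exfalso
    subst hc0
    obtain ⟨d, hd0, hdlast, -, -, -⟩ := hcs
    exact hUne (by rw [← hdlast, show (Fin.last 0) = 0 from rfl, hd0])
  -- extract a simple S-invariant subspace W at the bottom of the series for U
  obtain ⟨d, hd0, hdlast, hdinv, hdlt, hdcov⟩ := id hcs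
  set i0 : Fin c := ⟨0, hcpos⟩ with hi0def
  have hi0c : i0.castSucc = 0 := by
    ext
    simp [hi0def]
  set W : Submodule F V := d i0.succ with hWdef
  have hWinv : IsSubrep (ρ.comp S.subtype) W := hdinv _
  have hbotlt : ⊥ < W := by
    have := hdlt i0
    rwa [hi0c, hd0] at this
  have hWne : W ≠ ⊥ := hbotlt.ne'
  have hWsimple : ∀ p : Submodule F V, p ≤ W → IsSubrep (ρ.comp S.subtype) p →
      p = ⊥ ∨ p = W := by
    intro p hpW hpinv
    have := hdcov i0 p hpinv (by rw [hi0c, hd0]; exact bot_le) hpW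
    rwa [hi0c, hd0] at this
  -- dimension counting
  have hstepS : ∀ X Y : Submodule F V, IsSubrep (ρ.comp S.subtype) X →
      IsSubrep (ρ.comp S.subtype) Y → X < Y →
      (∀ q, IsSubrep (ρ.comp S.subtype) q → X ≤ q → q ≤ Y → q = X ∨ q = Y) →
      finrank F Y = finrank F X + finrank F W :=
    fun X Y hX hY hlt hcov => cover_finrank ρ S hV W hWinv hWne hWsimple hX hY hlt hcov
  have hstepH : ∀ X Y : Submodule F V, IsSubrep (ρ.comp H.subtype) X →
      IsSubrep (ρ.comp H.subtype) Y → X < Y →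
      (∀ q, IsSubrep (ρ.comp H.subtype) q → X ≤ q → q ≤ Y → q = X ∨ q = Y) →
      finrank F Y = finrank F X + finrank F U :=
    fun X Y hX hY hlt hcov => cover_finrank ρ H hV U hUsub hUne hUsimple hX hY hlt hcov
  have h1 : finrank F (⊤ : Submodule F V) = a * finrank F W := series_finrank ha hstepS
  have h2 : finrank F (⊤ : Submodule F V) = b * finrank F U := series_finrank hb hstepH
  have h3 : finrank F U = c * finrank F W := series_finrank hcs hstepS
  have hn : 0 < finrank F W := by
    rcases Nat.eq_zero_or_pos (finrank F W) with h | h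
    · exact absurd (Submodule.finrank_eq_zero.mp h) hWne
    · exact h
  have : a * finrank F W = (b * c) * finrank F W := by
    rw [← h1, h2, h3, mul_assoc]
  exact Nat.eq_of_mul_eq_mul_right hn this
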